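/- Dually, for the 'sup-sup' stopping problem on a finite filtered space: $Z_t := \sup_{\tau \in \mathcal{T}_t} \mathcal{E}_t[f_\tau]$ satisfies $Z_T = f_T$, $Z_t = f_t \vee \mathcal{E}_t(Z_{t+1})$, and $\tau^{**} := \inf\{t \ge 0 : f_t = Z_t\}$ is optimal: $Z_0 = \mathcal{E}[f_{\tau^{**}}]$. -/
import Mathlib


/-! Adverse optimal stopping for nonlinear expectations on the product path space
`Ω = Ω₁^ℕ` (coordinates `0, …, T-1` are observed at times `1, …, T`), with `Ω₁` finite.
`R t ω` is the set of one-step transition laws available at time `t` in state `ω`;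
the pasting-stable family `𝔯_t(ω)` is encoded by the recursively defined nonlinear
conditional expectation `NE`. -/

/-- The nonlinear conditional expectation `𝓔_t[ξ](ω) = sup_{P ∈ 𝔯_t(ω)} E_P[ξ(ω^t, ·)]`
obtained by backward recursion over the one-step kernel sets `R`. -/
noncomputable def NE {Ω₁ : Type*} [Fintype Ω₁] (T : ℕ)
    (R : ℕ → (ℕ → Ω₁) → Set (Ω₁ → ℝ)) (t : ℕ) (ξ : (ℕ → Ω₁) → ℝ) : (ℕ → Ω₁) → ℝ :=
  if h : T ≤ t then ξ
  else fun ω =>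
    sSup ((fun P : Ω₁ → ℝ =>
      ∑ x : Ω₁, P x * NE T R (t + 1) ξ (Function.update ω t x)) '' R t ω)
termination_by T - t
decreasing_by omega

/-- Stopping times of the raw filtration with values in `[t, T]`. -/
def IsStopAt {Ω₁ : Type*} (T t : ℕ) (τ : (ℕ → Ω₁) → ℕ) : Prop :=
  (∀ ω, t ≤ τ ω ∧ τ ω ≤ T) ∧
  ∀ s : ℕ, ∀ ω ω' : ℕ → Ω₁, (∀ j, j < s → ω j = ω' j) → τ ω = s → τ ω' = s

/-- An adapted payoff process: `f t` depends only on the first `t` coordinates. -/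
def AdaptedProc {Ω₁ : Type*} (T : ℕ) (f : ℕ → (ℕ → Ω₁) → ℝ) : Prop :=
  ∀ t ≤ T, ∀ ω ω' : ℕ → Ω₁, (∀ j, j < t → ω j = ω' j) → f t ω = f t ω'

/-- The one-step kernel sets are nonempty convex-free families of probability vectors,
depending only on the past. -/
def GoodKernels {Ω₁ : Type*} [Fintype Ω₁] (T : ℕ)
    (R : ℕ → (ℕ → Ω₁) → Set (Ω₁ → ℝ)) : Prop :=
  ∀ t, t < T → ∀ ω : ℕ → Ω₁,
    (R t ω).Nonempty ∧
    (∀ P ∈ R t ω, (∀ x, 0 ≤ P x) ∧ ∑ x : Ω₁, P x = 1) ∧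
    (∀ ω' : ℕ → Ω₁, (∀ j, j < t → ω j = ω' j) → R t ω = R t ω')

/-- The upper value process `X t = inf_{τ ∈ 𝒯_t} 𝓔_t[f_τ]`. -/
noncomputable def upValue {Ω₁ : Type*} [Fintype Ω₁] (T : ℕ)
    (R : ℕ → (ℕ → Ω₁) → Set (Ω₁ → ℝ)) (f : ℕ → (ℕ → Ω₁) → ℝ) (t : ℕ) :
    (ℕ → Ω₁) → ℝ :=
  fun ω => ⨅ τ : {τ : (ℕ → Ω₁) → ℕ // IsStopAt T t τ},
    NE T R t (fun ω' => f (τ.1 ω') ω') ω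
/-- The value process `Z t = sup_{τ ∈ 𝒯_t} 𝓔_t[f_τ]` of the `sup sup` problem. -/
noncomputable def supValue {Ω₁ : Type*} [Fintype Ω₁] (T : ℕ)
    (R : ℕ → (ℕ → Ω₁) → Set (Ω₁ → ℝ)) (f : ℕ → (ℕ → Ω₁) → ℝ) (t : ℕ) :
    (ℕ → Ω₁) → ℝ :=
  fun ω => ⨆ τ : {τ : (ℕ → Ω₁) → ℕ // IsStopAt T t τ},
    NE T R t (fun ω' => f (τ.1 ω') ω') ω

section Aux

variable {Ω₁ : Type*} [Fintype Ω₁] [Nonempty Ω₁]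

/-- "determined by coordinates < n" -/
def DOn (n : ℕ) (ξ : (ℕ → Ω₁) → ℝ) : Prop :=
  ∀ ω ω' : ℕ → Ω₁, (∀ j, j < n → ω j = ω' j) → ξ ω = ξ ω'

omit [Fintype Ω₁] [Nonempty Ω₁] in
lemma DOn.mono {n m : ℕ} (h : n ≤ m) {ξ : (ℕ → Ω₁) → ℝ} (hξ : DOn n ξ) : DOn m ξ :=
  fun ω ω' hag => hξ ω ω' (fun j hj => hag j (lt_of_lt_of_le hj h))

variable (T : ℕ) (R : ℕ → (ℕ → Ω₁) → Set (Ω₁ → ℝ))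

omit [Nonempty Ω₁] in
lemma NE_of_le {t : ℕ} (h : T ≤ t) (ξ : (ℕ → Ω₁) → ℝ) : NE T R t ξ = ξ := by
  rw [NE]; simp [h]

omit [Nonempty Ω₁] in
lemma NE_of_lt {t : ℕ} (h : t < T) (ξ : (ℕ → Ω₁) → ℝ) (ω : ℕ → Ω₁) :
    NE T R t ξ ω = sSup ((fun P : Ω₁ → ℝ =>
      ∑ x : Ω₁, P x * NE T R (t + 1) ξ (Function.update ω t x)) '' R t ω) := by
  rw [NE]; simp [not_le.2 h]

omit [Nonempty Ω₁] in
lemma prob_sum_le {P g : Ω₁ → ℝ} {M : ℝ} (hP0 : ∀ x, 0 ≤ P x) (hP1 : ∑ x : Ω₁, P x = 1)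
    (hg : ∀ x, g x ≤ M) : ∑ x : Ω₁, P x * g x ≤ M := by
  calc ∑ x : Ω₁, P x * g x ≤ ∑ x : Ω₁, P x * M :=
        Finset.sum_le_sum fun x _ => mul_le_mul_of_nonneg_left (hg x) (hP0 x)
    _ = M := by rw [← Finset.sum_mul, hP1, one_mul]

lemma bdd_img (hR : GoodKernels T R) {t : ℕ} (ht : t < T) (ω : ℕ → Ω₁) (g : Ω₁ → ℝ) :
    BddAbove ((fun P : Ω₁ → ℝ => ∑ x : Ω₁, P x * g x) '' R t ω) := by
  refine ⟨Finset.univ.sup' Finset.univ_nonempty g, ?_⟩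
  rintro y ⟨P, hP, rfl⟩
  obtain ⟨h0, h1⟩ := (hR t ht ω).2.1 P hP
  exact prob_sum_le h0 h1 (fun x => Finset.le_sup' g (Finset.mem_univ x))

omit [Nonempty Ω₁] in
lemma img_ne (hR : GoodKernels T R) {t : ℕ} (ht : t < T) (ω : ℕ → Ω₁) (g : Ω₁ → ℝ) :
    ((fun P : Ω₁ → ℝ => ∑ x : Ω₁, P x * g x) '' R t ω).Nonempty :=
  ((hR t ht ω).1).image _

omit [Nonempty Ω₁] in
/-- congruence of `NE t` on the cylinder of `ω` at level `t`. -/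
lemma NE_congr (t : ℕ) {ξ ξ' : (ℕ → Ω₁) → ℝ} {ω : ℕ → Ω₁}
    (h : ∀ ω' : ℕ → Ω₁, (∀ j, j < t → ω' j = ω j) → ξ ω' = ξ' ω') :
    NE T R t ξ ω = NE T R t ξ' ω := by
  by_cases hT : T ≤ t
  · rw [NE_of_le T R hT, NE_of_le T R hT]; exact h ω (fun _ _ => rfl)
  · push_neg at hT
    rw [NE_of_lt T R hT, NE_of_lt T R hT]
    congr 1
    have : (fun P : Ω₁ → ℝ => ∑ x : Ω₁, P x * NE T R (t + 1) ξ (Function.update ω t x))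
        = fun P : Ω₁ → ℝ => ∑ x : Ω₁, P x * NE T R (t + 1) ξ' (Function.update ω t x) := by
      funext P
      refine Finset.sum_congr rfl fun x _ => ?_
      rw [NE_congr (t + 1) (ω := Function.update ω t x) (fun ω' hω' => h ω' ?_)]
      intro j hj
      rw [hω' j (Nat.lt_succ_of_lt hj), Function.update_of_ne (Nat.ne_of_lt hj)]
    rw [this]
termination_by T - t
decreasing_by omega

/-- `NE t` of a `DOn T` function is `DOn t` (for `t ≤ T`). -/
lemma NE_DOn (hR : GoodKernels T R) {ξ : (ℕ → Ω₁) → ℝ} (hξ : DOn T ξ) (t : ℕ) (ht : t ≤ T) :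
    DOn t (NE T R t ξ) := by
  by_cases hT : T ≤ t
  · rw [NE_of_le T R hT]; exact DOn.mono hT hξ
  · push_neg at hT
    intro ω ω' hag
    rw [NE_of_lt T R hT, NE_of_lt T R hT]
    have hRe : R t ω = R t ω' := (hR t hT ω).2.2 ω' hag
    have hfe : (fun P : Ω₁ → ℝ => ∑ x : Ω₁, P x * NE T R (t + 1) ξ (Function.update ω t x))
        = fun P : Ω₁ → ℝ => ∑ x : Ω₁, P x * NE T R (t + 1) ξ (Function.update ω' t x) := by
      funext P
      refine Finset.sum_congr rfl fun x _ => ?_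
      congr 1
      refine NE_DOn hR hξ (t + 1) hT (Function.update ω t x) (Function.update ω' t x) ?_
      intro j hj
      rcases eq_or_ne j t with rfl | hne
      · simp
      · have hjt : j < t := by omega
        rw [Function.update_of_ne hne, Function.update_of_ne hne]
        exact hag j hjt
    rw [hRe, hfe]
termination_by T - t
decreasing_by omega

/-- `NE s` fixes functions determined by coordinates `< n ≤ s`. -/
lemma NE_const (hR : GoodKernels T R) {n : ℕ} {ξ : (ℕ → Ω₁) → ℝ} (hξ : DOn n ξ)
    (t : ℕ) (hnt : n ≤ t) (ω : ℕ → Ω₁) : NE T R t ξ ω = ξ ω := by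
  by_cases hT : T ≤ t
  · rw [NE_of_le T R hT]
  · push_neg at hT
    rw [NE_of_lt T R hT]
    have hval : ∀ x : Ω₁, NE T R (t + 1) ξ (Function.update ω t x) = ξ ω := by
      intro x
      rw [NE_const hR hξ (t + 1) (le_trans hnt (Nat.le_succ t)) _]
      refine hξ _ _ (fun j hj => ?_)
      have hne : j ≠ t := by omega
      exact Function.update_of_ne hne x ω
    have himg : ((fun P : Ω₁ → ℝ =>
        ∑ x : Ω₁, P x * NE T R (t + 1) ξ (Function.update ω t x)) '' R t ω) = {ξ ω} := by
      rw [Set.eq_singleton_iff_nonempty_unique_mem]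
      refine ⟨((hR t hT ω).1).image _, ?_⟩
      rintro y ⟨P, hP, rfl⟩
      obtain ⟨h0, h1⟩ := (hR t hT ω).2.1 P hP
      simp only [hval]
      rw [← Finset.sum_mul, h1, one_mul]
    rw [himg, csSup_singleton]
termination_by T - t
decreasing_by omega

end Aux

noncomputable def Yval {Ω₁ : Type*} [Fintype Ω₁] (T : ℕ)
    (R : ℕ → (ℕ → Ω₁) → Set (Ω₁ → ℝ)) (f : ℕ → (ℕ → Ω₁) → ℝ) (t : ℕ) :
    (ℕ → Ω₁) → ℝ :=
  if h : T ≤ t then f T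
  else fun ω => max (f t ω) (NE T R t (Yval T R f (t + 1)) ω)
termination_by T - t
decreasing_by omega

section Main

variable {Ω₁ : Type*} [Fintype Ω₁] [Nonempty Ω₁]
variable (T : ℕ) (R : ℕ → (ℕ → Ω₁) → Set (Ω₁ → ℝ)) (f : ℕ → (ℕ → Ω₁) → ℝ)

omit [Nonempty Ω₁] in
lemma Yval_of_le {t : ℕ} (h : T ≤ t) : Yval T R f t = f T := by
  rw [Yval]; simp [h]

omit [Nonempty Ω₁] in
lemma Yval_of_lt {t : ℕ} (h : t < T) (ω : ℕ → Ω₁) :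
    Yval T R f t ω = max (f t ω) (NE T R t (Yval T R f (t + 1)) ω) := by
  rw [Yval]; simp [not_le.2 h]

lemma Yval_DOn (hR : GoodKernels T R) (hf : AdaptedProc T f) (t : ℕ) (ht : t ≤ T) :
    DOn t (Yval T R f t) := by
  by_cases hT : T ≤ t
  · rw [Yval_of_le T R f hT]
    exact DOn.mono hT (hf T le_rfl)
  · push_neg at hT
    intro ω ω' hag
    rw [Yval_of_lt T R f hT, Yval_of_lt T R f hT]
    have h1 : f t ω = f t ω' := hf t hT.le ω ω' hag
    have h2 : DOn T (Yval T R f (t + 1)) :=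
      DOn.mono hT (Yval_DOn hR hf (t + 1) hT)
    have h3 := NE_DOn T R hR h2 t hT.le ω ω' hag
    rw [h1, h3]
termination_by T - t
decreasing_by omega

lemma le_Y (hR : GoodKernels T R) (hf : AdaptedProc T f) (t : ℕ) (ht : t ≤ T)
    (τ : (ℕ → Ω₁) → ℕ) (hτ : IsStopAt T t τ) (ω : ℕ → Ω₁) :
    NE T R t (fun ω' => f (τ ω') ω') ω ≤ Yval T R f t ω := by
  by_cases hT : T ≤ t
  · rw [NE_of_le T R hT, Yval_of_le T R f hT]
    have hτω : τ ω = T := le_antisymm (hτ.1 ω).2 (le_trans hT (hτ.1 ω).1)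
    rw [hτω]
  · push_neg at hT
    rw [Yval_of_lt T R f hT]
    by_cases hτt : τ ω = t
    · have hcg : NE T R t (fun ω' => f (τ ω') ω') ω = NE T R t (fun ω' => f t ω') ω := by
        refine NE_congr T R t (fun ω' hag => ?_)
        rw [hτ.2 t ω ω' (fun j hj => (hag j hj).symm) hτt]
      rw [hcg, NE_const T R hR (hf t hT.le) t le_rfl]
      exact le_max_left _ _
    · set τ' : (ℕ → Ω₁) → ℕ := fun ω' => max (τ ω') (t + 1) with hτ'def
      have hτ' : IsStopAt T (t + 1) τ' := by
        constructor
        · intro ω₁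
          exact ⟨le_max_right _ _, max_le (hτ.1 ω₁).2 hT⟩
        · intro s ω₁ ω₂ hag hs
          rcases le_or_gt (τ ω₁) (t + 1) with hle | hlt
          · have hs' : s = t + 1 := by rw [← hs]; simp [hτ'def, max_eq_right hle]
            have hτ₂ : τ ω₂ = τ ω₁ :=
              hτ.2 (τ ω₁) ω₁ ω₂ (fun j hj => hag j (by omega)) rfl
            simp [hτ'def, hτ₂, max_eq_right hle, hs']
          · have hs' : τ ω₁ = s := by rw [← hs]; simp [hτ'def, max_eq_left hlt.le]
            have hτ₂ : τ ω₂ = s := hτ.2 s ω₁ ω₂ (fun j hj => hag j hj) hs'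
            simp [hτ'def, hτ₂, max_eq_left (by omega : t + 1 ≤ s)]
      have hcg : NE T R t (fun ω' => f (τ ω') ω') ω = NE T R t (fun ω' => f (τ' ω') ω') ω := by
        refine NE_congr T R t (fun ω' hag => ?_)
        have hne : τ ω' ≠ t := fun h => hτt (hτ.2 t ω' ω (fun j hj => hag j hj) h)
        have hge : t + 1 ≤ τ ω' := by have := (hτ.1 ω').1; omega
        simp [hτ'def, max_eq_left hge]
      rw [hcg, NE_of_lt T R hT]
      refine csSup_le (img_ne T R hR hT ω _) ?_
      rintro y ⟨P, hP, rfl⟩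
      refine le_trans ?_ (le_max_right _ _)
      rw [NE_of_lt T R hT]
      refine le_trans ?_ (le_csSup (bdd_img T R hR hT ω _) (Set.mem_image_of_mem _ hP))
      refine Finset.sum_le_sum fun x _ => ?_
      refine mul_le_mul_of_nonneg_left ?_ (((hR t hT ω).2.1 P hP).1 x)
      have hle := le_Y hR hf (t + 1) hT τ' hτ' (Function.update ω t x)
      have heq : Yval T R f (t + 1) (Function.update ω t x)
          = NE T R (t + 1) (Yval T R f (t + 1)) (Function.update ω t x) :=
        (NE_const T R hR (Yval_DOn T R f hR hf (t + 1) hT) (t + 1) le_rfl _).symm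
      exact heq ▸ hle
termination_by T - t
decreasing_by omega

/-- the first time `s ≥ t` where `f s = Yval s`. -/
noncomputable def hitT (t : ℕ) (ω : ℕ → Ω₁) : ℕ :=
  sInf {s : ℕ | t ≤ s ∧ f s ω = Yval T R f s ω}

lemma hit_memT {t : ℕ} (ht : t ≤ T) (ω : ℕ → Ω₁) :
    T ∈ {s : ℕ | t ≤ s ∧ f s ω = Yval T R f s ω} :=
  ⟨ht, by rw [Yval_of_le T R f le_rfl]⟩

lemma hit_mem {t : ℕ} (ht : t ≤ T) (ω : ℕ → Ω₁) :
    hitT T R f t ω ∈ {s : ℕ | t ≤ s ∧ f s ω = Yval T R f s ω} :=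
  Nat.sInf_mem ⟨T, hit_memT T R f ht ω⟩

lemma hit_le {t : ℕ} (ht : t ≤ T) (ω : ℕ → Ω₁) : hitT T R f t ω ≤ T :=
  Nat.sInf_le (hit_memT T R f ht ω)

lemma hit_stop (hR : GoodKernels T R) (hf : AdaptedProc T f) (t : ℕ) (ht : t ≤ T) :
    IsStopAt T t (hitT T R f t) := by
  constructor
  · intro ω
    exact ⟨(hit_mem T R f ht ω).1, hit_le T R f ht ω⟩
  · intro s ω ω' hag hs
    have hsT : s ≤ T := hs ▸ hit_le T R f ht ω
    have hsmem : s ∈ {r : ℕ | t ≤ r ∧ f r ω = Yval T R f r ω} := hs ▸ hit_mem T R f ht ω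
    have htrans : ∀ r, r ≤ s →
        (r ∈ {r : ℕ | t ≤ r ∧ f r ω = Yval T R f r ω} ↔
          r ∈ {r : ℕ | t ≤ r ∧ f r ω' = Yval T R f r ω'}) := by
      intro r hr
      have hrT : r ≤ T := le_trans hr hsT
      have hagr : ∀ j, j < r → ω j = ω' j := fun j hj => hag j (lt_of_lt_of_le hj hr)
      have h1 : f r ω = f r ω' := hf r hrT ω ω' hagr
      have h2 : Yval T R f r ω = Yval T R f r ω' := Yval_DOn T R f hR hf r hrT ω ω' hagr
      simp only [Set.mem_setOf_eq, h1, h2]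
    have hsmem' : s ∈ {r : ℕ | t ≤ r ∧ f r ω' = Yval T R f r ω'} :=
      (htrans s le_rfl).1 hsmem
    refine le_antisymm (Nat.sInf_le hsmem') ?_
    have hmem' := Nat.sInf_mem (⟨s, hsmem'⟩ :
      {r : ℕ | t ≤ r ∧ f r ω' = Yval T R f r ω'}.Nonempty)
    by_contra hcon
    push_neg at hcon
    have : hitT T R f t ω' ∈ {r : ℕ | t ≤ r ∧ f r ω = Yval T R f r ω} :=
      (htrans _ hcon.le).2 hmem'
    have h2 : hitT T R f t ω ≤ hitT T R f t ω' := Nat.sInf_le this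
    omega

lemma NE_hit (hR : GoodKernels T R) (hf : AdaptedProc T f) (t : ℕ) (ht : t ≤ T) (ω : ℕ → Ω₁) :
    NE T R t (fun ω' => f (hitT T R f t ω') ω') ω = Yval T R f t ω := by
  by_cases hT : T ≤ t
  · have htT : t = T := le_antisymm ht hT
    rw [NE_of_le T R hT, Yval_of_le T R f hT]
    have hh : hitT T R f t ω = T := by
      refine le_antisymm (hit_le T R f ht ω) ?_
      have := (hit_mem T R f ht ω).1
      omega
    rw [hh]
  · push_neg at hT
    by_cases heq : f t ω = Yval T R f t ω
    · have hcg : NE T R t (fun ω' => f (hitT T R f t ω') ω') ω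
          = NE T R t (fun ω' => f t ω') ω := by
        refine NE_congr T R t (fun ω' hag => ?_)
        have hagr : ∀ j, j < t → ω j = ω' j := fun j hj => (hag j hj).symm
        have hmem : t ∈ {s : ℕ | t ≤ s ∧ f s ω' = Yval T R f s ω'} := by
          refine ⟨le_rfl, ?_⟩
          rw [← hf t hT.le ω ω' hagr, ← Yval_DOn T R f hR hf t hT.le ω ω' hagr]
          exact heq
        have hh : hitT T R f t ω' = t :=
          le_antisymm (Nat.sInf_le hmem) (Nat.sInf_mem ⟨t, hmem⟩).1
        rw [hh]
      rw [hcg, NE_const T R hR (hf t hT.le) t le_rfl]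
      exact heq
    · have hmax : Yval T R f t ω = NE T R t (Yval T R f (t + 1)) ω := by
        rcases max_choice (f t ω) (NE T R t (Yval T R f (t + 1)) ω) with h | h
        · exfalso; exact heq ((Yval_of_lt T R f hT ω).trans h).symm
        · exact (Yval_of_lt T R f hT ω).trans h
      have hcg : NE T R t (fun ω' => f (hitT T R f t ω') ω') ω
          = NE T R t (fun ω' => f (hitT T R f (t + 1) ω') ω') ω := by
        refine NE_congr T R t (fun ω' hag => ?_)
        have hagr : ∀ j, j < t → ω j = ω' j := fun j hj => (hag j hj).symm
        have hne' : f t ω' ≠ Yval T R f t ω' := by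
          rw [← hf t hT.le ω ω' hagr, ← Yval_DOn T R f hR hf t hT.le ω ω' hagr]
          exact heq
        have hset : {s : ℕ | t ≤ s ∧ f s ω' = Yval T R f s ω'}
            = {s : ℕ | t + 1 ≤ s ∧ f s ω' = Yval T R f s ω'} := by
          ext s
          simp only [Set.mem_setOf_eq]
          constructor
          · rintro ⟨h1, h2⟩
            rcases eq_or_lt_of_le h1 with rfl | h1'
            · exact absurd h2 hne'
            · exact ⟨h1', h2⟩
          · rintro ⟨h1, h2⟩
            exact ⟨by omega, h2⟩
        unfold hitT
        rw [hset]
      rw [hcg, hmax, NE_of_lt T R hT, NE_of_lt T R hT]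
      congr 1
      have : (fun P : Ω₁ → ℝ => ∑ x : Ω₁, P x *
            NE T R (t + 1) (fun ω' => f (hitT T R f (t + 1) ω') ω') (Function.update ω t x))
          = fun P : Ω₁ → ℝ => ∑ x : Ω₁, P x *
            NE T R (t + 1) (Yval T R f (t + 1)) (Function.update ω t x) := by
        funext P
        refine Finset.sum_congr rfl fun x _ => ?_
        rw [NE_hit hR hf (t + 1) hT (Function.update ω t x),
          NE_const T R hR (Yval_DOn T R f hR hf (t + 1) hT) (t + 1) le_rfl]
      rw [this]
termination_by T - t
decreasing_by omega

end Main

section Final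

variable {Ω₁ : Type*} [Fintype Ω₁] [Nonempty Ω₁]
variable (T : ℕ) (R : ℕ → (ℕ → Ω₁) → Set (Ω₁ → ℝ)) (f : ℕ → (ℕ → Ω₁) → ℝ)

lemma stop_inst {t : ℕ} (ht : t ≤ T) :
    Nonempty {τ : (ℕ → Ω₁) → ℕ // IsStopAt T t τ} :=
  ⟨⟨fun _ => T, ⟨fun _ => ⟨ht, le_rfl⟩, fun _ _ _ _ h => h⟩⟩⟩

lemma Z_eq_Y (hR : GoodKernels T R) (hf : AdaptedProc T f) (t : ℕ) (ht : t ≤ T)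
    (ω : ℕ → Ω₁) : supValue T R f t ω = Yval T R f t ω := by
  have := stop_inst T (Ω₁ := Ω₁) ht
  refine le_antisymm (ciSup_le fun τ => le_Y T R f hR hf t ht τ.1 τ.2 ω) ?_
  rw [← NE_hit T R f hR hf t ht ω]
  refine le_ciSup (f := fun τ : {τ : (ℕ → Ω₁) → ℕ // IsStopAt T t τ} =>
    NE T R t (fun ω' => f (τ.1 ω') ω') ω) ?_ ⟨hitT T R f t, hit_stop T R f hR hf t ht⟩
  refine ⟨Yval T R f t ω, ?_⟩
  rintro y ⟨τ, rfl⟩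
  exact le_Y T R f hR hf t ht τ.1 τ.2 ω

end Final

/-- Dynamic programming for the `sup sup` stopping problem: `Z T = f T`,
`Z t = max (f t) (𝓔_t Z_{t+1})`, and the first hitting time
`τ** = inf {t : f t = Z t}` is optimal: `Z 0 = 𝓔[f_{τ**}]`. -/
theorem stmt12 {Ω₁ : Type*} [Fintype Ω₁] [Nonempty Ω₁] (T : ℕ)
    (R : ℕ → (ℕ → Ω₁) → Set (Ω₁ → ℝ)) (f : ℕ → (ℕ → Ω₁) → ℝ)
    (hR : GoodKernels T R) (hf : AdaptedProc T f) :
    (∀ ω, supValue T R f T ω = f T ω) ∧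
    (∀ t, t < T → ∀ ω,
      supValue T R f t ω = max (f t ω) (NE T R t (supValue T R f (t + 1)) ω)) ∧
    IsStopAt T 0 (fun ω => sInf {t : ℕ | f t ω = supValue T R f t ω}) ∧
    (∀ ω, supValue T R f 0 ω =
      NE T R 0 (fun ω' => f (sInf {t : ℕ | f t ω' = supValue T R f t ω'}) ω') ω) := by
  have hAeq : ∀ ω : ℕ → Ω₁,
      sInf {t : ℕ | f t ω = supValue T R f t ω} = hitT T R f 0 ω := by
    intro ω
    have hTA : T ∈ {t : ℕ | f t ω = supValue T R f t ω} := by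
      simp only [Set.mem_setOf_eq]
      rw [Z_eq_Y T R f hR hf T le_rfl ω, Yval_of_le T R f le_rfl]
    have htrans : ∀ r, r ≤ T →
        (r ∈ {t : ℕ | f t ω = supValue T R f t ω} ↔
          r ∈ {s : ℕ | 0 ≤ s ∧ f s ω = Yval T R f s ω}) := by
      intro r hr
      simp only [Set.mem_setOf_eq, Nat.zero_le, true_and,
        Z_eq_Y T R f hR hf r hr ω]
    have hA1 : sInf {t : ℕ | f t ω = supValue T R f t ω} ≤ T := Nat.sInf_le hTA
    have hA2 := Nat.sInf_mem (⟨T, hTA⟩ :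
      {t : ℕ | f t ω = supValue T R f t ω}.Nonempty)
    have hB1 : hitT T R f 0 ω ≤ T := hit_le T R f (Nat.zero_le T) ω
    have hB2 := hit_mem T R f (Nat.zero_le T) ω
    refine le_antisymm ?_ ?_
    · exact Nat.sInf_le ((htrans _ hB1).2 hB2)
    · exact Nat.sInf_le ((htrans _ hA1).1 hA2)
  refine ⟨?_, ?_, ?_, ?_⟩
  · intro ω
    rw [Z_eq_Y T R f hR hf T le_rfl ω, Yval_of_le T R f le_rfl]
  · intro t ht ω
    rw [Z_eq_Y T R f hR hf t ht.le ω, Yval_of_lt T R f ht ω]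
    congr 2
    funext ω'
    exact (Z_eq_Y T R f hR hf (t + 1) ht ω').symm
  · have hfe : (fun ω : ℕ → Ω₁ => sInf {t : ℕ | f t ω = supValue T R f t ω})
        = hitT T R f 0 := funext hAeq
    rw [hfe]
    exact hit_stop T R f hR hf 0 (Nat.zero_le T)
  · intro ω
    rw [Z_eq_Y T R f hR hf 0 (Nat.zero_le T) ω, ← NE_hit T R f hR hf 0 (Nat.zero_le T) ω]
    refine congrFun (congrArg (NE T R 0) (funext fun ω' => ?_)) ω
    rw [hAeq ω']
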